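/- arXiv:1006.3400 — 3 statements merged into one kernel-verified Lean document; each statement's English description precedes it below -/
import Mathlib

section
/- Let (m, N, a) be a triple as in the context. Then ∑_{n=1}^{m−1} d_n = 1 + ((N − 2)·m − ∑_{i=1}^N gcd(a_i, m))/2. (The right-hand side is the genus of the curve y^m = ∏_{i=1}^N (x − t_i)^{a_i} with distinct branch points t_1, …, t_N, so this identity states that the genus equals the sum of the Hodge eigenspace dimensions.) -/
open Finset

/-- The dimension `d_n` of the Hodge eigenspace: `d_n = (1/m)·∑_i ((n·a_i) mod m) − 1`,
where `(x mod m)` is the representative of `x` in `{0, …, m−1}` (here `Int.emod`,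
which lands in `{0, …, m−1}` since `m > 0`). -/
def hodgeDim (m N : ℕ) (a : Fin N → ℤ) (n : ℤ) : ℚ :=
  ((∑ i, (n * a i) % (m : ℤ) :) : ℚ) / m - 1

/-- The hypotheses on a triple `(m, N, a)`: `m ≥ 2`, `N ≥ 4`, `1 ≤ a_i ≤ m − 1` for all `i`,
`gcd(m, a_1, …, a_N) = 1`, and `a_1 + ⋯ + a_N ≡ 0 (mod m)`. -/
def IsTriple (m N : ℕ) (a : Fin N → ℤ) : Prop :=
  2 ≤ m ∧ 4 ≤ N ∧ (∀ i, 1 ≤ a i ∧ a i ≤ (m : ℤ) - 1) ∧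
    Int.gcd (m : ℤ) (Finset.univ.gcd a) = 1 ∧ ((m : ℤ) ∣ ∑ i, a i)

/-- Condition (⋆): `N − 3 = ∑_{n=1}^{⌊(m−1)/2⌋} d_n·d_{m−n} + ε`, where
`ε = d_{m/2}(d_{m/2}+1)/2` if `m` is even and `ε = 0` if `m` is odd. -/
def CondStar (m N : ℕ) (a : Fin N → ℤ) : Prop :=
  (N : ℚ) - 3 =
    (∑ n ∈ Finset.Icc 1 ((m - 1) / 2), hodgeDim m N a n * hodgeDim m N a ((m : ℤ) - n)) +
      if m % 2 = 0 then hodgeDim m N a (m / 2) * (hodgeDim m N a (m / 2) + 1) / 2 else 0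

/-- Two `N`-tuples are equivalent (for the modulus `m`) if there is `t` with `gcd(t, m) = 1`
and a permutation `σ` with `a'_i ≡ t·a_{σ(i)} (mod m)` for all `i`. -/
def EquivTuple (m N : ℕ) (a a' : Fin N → ℤ) : Prop :=
  ∃ t : ℤ, Int.gcd t m = 1 ∧ ∃ σ : Equiv.Perm (Fin N),
    ∀ i, a' i ≡ t * a (σ i) [ZMOD (m : ℤ)]

/-- The twenty triples, each given as the pair of `m` and the tuple `a`
(the number of branch points `N` being the length of the tuple). -/
def twentyTriples : List (ℕ × List ℕ) :=
  [(2, [1,1,1,1]), (2, [1,1,1,1,1,1]), (3, [1,1,2,2]), (4, [1,2,2,3]),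
   (6, [2,3,3,4]), (3, [1,1,1,1,2]), (4, [1,1,1,1]), (4, [1,1,2,2,2]),
   (6, [1,3,4,4]), (3, [1,1,1,1,1,1]), (5, [1,3,3,3]), (6, [1,1,1,3]),
   (6, [1,1,2,2]), (6, [2,2,2,3,3]), (8, [2,4,5,5]), (5, [2,2,2,2,2]),
   (7, [2,4,4,4]), (10, [3,5,6,6]), (9, [3,5,5,5]), (12, [4,6,7,7])]



lemma dvd_char (m : ℕ) (hm : 0 < m) (a n : ℤ) :
    (m : ℤ) ∣ n * a ↔ ((m / Int.gcd a m : ℕ) : ℤ) ∣ n := by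
  set d : ℕ := Int.gcd a m with hd
  have hd0 : 0 < d := Int.gcd_pos_of_ne_zero_right a (by exact_mod_cast hm.ne')
  have hdm : (d : ℤ) ∣ (m : ℤ) := Int.gcd_dvd_right a m
  have hda : (d : ℤ) ∣ a := Int.gcd_dvd_left a m
  have hcop : Int.gcd (a / d) ((m : ℤ) / d) = 1 := Int.gcd_div_gcd_div_gcd hd0
  have hmd : ((m / d : ℕ) : ℤ) = (m : ℤ) / d := Int.natCast_div m d
  rw [hmd]
  obtain ⟨m', hm'⟩ := hdm
  obtain ⟨a', ha'⟩ := hda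
  have hdz : (d:ℤ) ≠ 0 := by exact_mod_cast hd0.ne'
  have hm'e : (m:ℤ) / d = m' := by rw [hm']; exact Int.mul_ediv_cancel_left _ hdz
  have ha'e : a / d = a' := by rw [ha']; exact Int.mul_ediv_cancel_left _ hdz
  rw [hm'e]
  rw [hm'e, ha'e] at hcop
  have hcop' : IsCoprime a' m' := Int.isCoprime_iff_gcd_eq_one.mpr hcop
  constructor
  · intro h
    rw [hm', ha'] at h
    have h2 : (d:ℤ) * m' ∣ (d:ℤ) * (n * a') := by
      refine Dvd.dvd.trans ?_ (dvd_of_eq (by ring : n * ((d:ℤ) * a') = (d:ℤ) * (n * a')))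
      exact h
    exact hcop'.symm.dvd_of_dvd_mul_right ((mul_dvd_mul_iff_left hdz).mp h2)
  · intro ⟨k, hk⟩
    rw [hm', ha', hk]; exact ⟨k * a', by ring⟩

lemma two_mul_sum_mod (m : ℕ) (hm : 0 < m) (a : ℤ) :
    (2:ℤ) * ∑ n ∈ Finset.Icc 1 (m-1), ((n:ℤ) * a % m) = m * (m - Int.gcd a m) := by
  set d : ℕ := Int.gcd a m with hd
  have hd0 : 0 < d := Int.gcd_pos_of_ne_zero_right a (by exact_mod_cast hm.ne')
  have hdm : d ∣ m := by
    have h := Int.gcd_dvd_right (a := a) (b := (m:ℤ))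
    exact_mod_cast h
  set m' : ℕ := m / d with hm'def
  have hmm : d * m' = m := Nat.mul_div_cancel' hdm
  have hm'0 : 0 < m' := Nat.div_pos (Nat.le_of_dvd hm hdm) hd0
  have hpt : ∀ n ∈ Finset.Icc 1 (m-1),
      ((n:ℤ) * a % m) + (((m - n : ℕ):ℤ) * a % m) = if m' ∣ n then 0 else (m:ℤ) := by
    intro n hn
    simp only [Finset.mem_Icc] at hn
    have hnm : n ≤ m := by omega
    have hcast : ((m - n : ℕ):ℤ) = (m:ℤ) - n := by push_cast [hnm]; ring
    have hneg : ((m - n : ℕ):ℤ) * a % m = (-((n:ℤ) * a)) % m := by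
      rw [hcast, show ((m:ℤ) - n) * a = -((n:ℤ) * a) + (m:ℤ) * a by ring,
        Int.add_mul_emod_self_left]
    have hchar : (m : ℤ) ∣ (n:ℤ) * a ↔ m' ∣ n := by
      rw [dvd_char m hm a n, ← hd, ← hm'def, Int.natCast_dvd_natCast]
    by_cases hc : (m:ℤ) ∣ (n:ℤ) * a
    · rw [if_pos (hchar.mp hc), hneg, Int.emod_eq_zero_of_dvd hc,
        Int.emod_eq_zero_of_dvd (dvd_neg.mpr hc)]
      ring
    · rw [if_neg (fun h => hc (hchar.mpr h)), hneg]
      set r : ℤ := (n:ℤ) * a % m with hr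
      have hr0 : 0 ≤ r := Int.emod_nonneg _ (by exact_mod_cast hm.ne')
      have hrm : r < m := Int.emod_lt_of_pos _ (by exact_mod_cast hm)
      have hrne : r ≠ 0 := fun h => hc (Int.dvd_of_emod_eq_zero h)
      have key : -((n:ℤ) * a) + (m:ℤ) * ((n:ℤ) * a / m + 1) = (m:ℤ) - r := by
        rw [hr, Int.emod_def]; ring
      calc r + (-((n:ℤ) * a)) % m
          = r + (-((n:ℤ) * a) + (m:ℤ) * ((n:ℤ) * a / m + 1)) % m := by
            rw [Int.add_mul_emod_self_left]
        _ = r + ((m:ℤ) - r) % m := by rw [key]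
        _ = r + ((m:ℤ) - r) := by rw [Int.emod_eq_of_lt (by omega) (by omega)]
        _ = m := by ring
  have hrev : ∑ n ∈ Finset.Icc 1 (m-1), (((m - n : ℕ):ℤ) * a % m)
      = ∑ n ∈ Finset.Icc 1 (m-1), ((n:ℤ) * a % m) := by
    refine Finset.sum_nbij' (fun n => m - n) (fun n => m - n) ?_ ?_ ?_ ?_ ?_ <;>
      (intro x hx; simp only [Finset.mem_Icc] at *) <;> omega
  have h2S : (2:ℤ) * ∑ n ∈ Finset.Icc 1 (m-1), ((n:ℤ) * a % m)
      = ∑ n ∈ Finset.Icc 1 (m-1), (if m' ∣ n then (0:ℤ) else (m:ℤ)) := by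
    rw [two_mul]
    nth_rewrite 2 [← hrev]
    rw [← Finset.sum_add_distrib]
    exact Finset.sum_congr rfl hpt
  rw [h2S]
  have hcount : ((Finset.Icc 1 (m-1)).filter (fun n => m' ∣ n)).card = d - 1 := by
    rw [show Finset.Icc 1 (m-1) = Finset.Ioc 0 (m-1) from rfl]
    rw [Nat.Ioc_filter_dvd_card_eq_div]
    have h1 : (d-1) * m' ≤ m - 1 := by rw [Nat.sub_one_mul]; omega
    have h2 : m - 1 < (d-1+1) * m' := by rw [Nat.sub_add_cancel hd0]; omega
    exact Nat.div_eq_of_lt_le h1 h2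
  rw [Finset.sum_ite, Finset.sum_const, Finset.sum_const, smul_zero, zero_add,
    Finset.filter_not, Finset.card_sdiff_of_subset (Finset.filter_subset _ _), hcount,
    Nat.card_Icc]
  have hdlem : d ≤ m := Nat.le_of_dvd hm hdm
  have : (m - 1 + 1 - 1) - (d - 1) = m - d := by omega
  rw [this, nsmul_eq_mul]
  have : ((m - d : ℕ) : ℤ) = (m:ℤ) - d := by push_cast [hdlem]; ring
  rw [this]; ring

theorem sum_hodgeDim_eq_genus' (m N : ℕ) (a : Fin N → ℤ)
    (htriple : (2 ≤ m ∧ 4 ≤ N ∧ (∀ i, 1 ≤ a i ∧ a i ≤ (m : ℤ) - 1) ∧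
    Int.gcd (m : ℤ) (Finset.univ.gcd a) = 1 ∧ ((m : ℤ) ∣ ∑ i, a i))) :
    ∑ n ∈ Finset.Icc 1 (m - 1), (((∑ i, ((n:ℤ) * a i) % (m : ℤ) :) : ℚ) / m - 1) =
      1 + (((N : ℚ) - 2) * m - ∑ i, (Int.gcd (a i) m : ℚ)) / 2 := by
  obtain ⟨hm, hN, hbound, hgcd, hdvd⟩ := htriple
  have hm0 : 0 < m := by omega
  have hmQ : ((m:ℚ)) ≠ 0 := by exact_mod_cast hm0.ne'
  rw [Finset.sum_sub_distrib, Finset.sum_const, Nat.card_Icc, ← Finset.sum_div]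
  have hswap : ∑ n ∈ Finset.Icc 1 (m-1), ((∑ i, (((n:ℕ):ℤ) * a i) % (m:ℤ) : ℤ) : ℚ)
      = ∑ i, ((∑ n ∈ Finset.Icc 1 (m-1), (((n:ℕ):ℤ) * a i) % (m:ℤ) : ℤ) : ℚ) := by
    push_cast
    exact Finset.sum_comm
  rw [hswap]
  have hval : ∀ i : Fin N, ((∑ n ∈ Finset.Icc 1 (m-1), (((n:ℕ):ℤ) * a i) % (m:ℤ) : ℤ) : ℚ)
      = ((m:ℚ) * ((m:ℚ) - (Int.gcd (a i) m : ℚ))) / 2 := by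
    intro i
    have h := two_mul_sum_mod m hm0 (a i)
    have h' : (2:ℚ) * ((∑ n ∈ Finset.Icc 1 (m-1), ((n:ℤ) * a i % m) : ℤ) : ℚ)
        = (m:ℚ) * ((m:ℚ) - (Int.gcd (a i) m : ℚ)) := by exact_mod_cast h
    linarith
  rw [Finset.sum_congr rfl (fun i _ => hval i)]
  have expand : ∑ i, ((m:ℚ) * ((m:ℚ) - (Int.gcd (a i) m : ℚ)) / 2)
      = ((m:ℚ) * ((N:ℚ)*(m:ℚ) - ∑ i, (Int.gcd (a i) m : ℚ))) / 2 := by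
    rw [← Finset.sum_div, ← Finset.mul_sum, Finset.sum_sub_distrib, Finset.sum_const,
      Finset.card_univ, Fintype.card_fin, nsmul_eq_mul]
  rw [expand]
  have hcard : ((m-1+1-1:ℕ) • (1:ℚ)) = (m:ℚ) - 1 := by
    rw [nsmul_eq_mul, mul_one]
    have h1 : m-1+1-1 = m-1 := by omega
    rw [h1]
    push_cast [show 1 ≤ m by omega]
    ring
  rw [hcard]
  field_simp
  ring

/-- For a triple `(m, N, a)`:
`∑_{n=1}^{m−1} d_n = 1 + ((N − 2)·m − ∑_i gcd(a_i, m))/2` (the genus of the covering curve). -/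
theorem sum_hodgeDim_eq_genus (m N : ℕ) (a : Fin N → ℤ)
    (htriple : IsTriple m N a) :
    ∑ n ∈ Finset.Icc 1 (m - 1), hodgeDim m N a n =
      1 + (((N : ℚ) - 2) * m - ∑ i, (Int.gcd (a i) m : ℚ)) / 2 := by
  have h := sum_hodgeDim_eq_genus' m N a htriple
  simpa [hodgeDim] using h
end

section
/- Let (m, N, a) be a triple as in the context, let t be an integer with gcd(t, m) = 1, let σ be a permutation of {1, …, N}, and define a′ by a′_i := (t·a_{σ(i)}) mod m. Then (m, N, a′) again satisfies the hypotheses of the context, for every integer n with m ∤ n one has d_n(a′) = d_{t·n}(a), and (m, N, a′) satisfies condition (⋆) if and only if (m, N, a) does. In other words, the hypotheses and condition (⋆) are invariant under equivalence of triples. -/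
open Finset

section Aux

lemma hodgeDim_congr (m N : ℕ) (a : Fin N → ℤ) {x y : ℤ} (h : x ≡ y [ZMOD (m : ℤ)]) :
    hodgeDim m N a x = hodgeDim m N a y := by
  have : ∑ i, (x * a i) % (m : ℤ) = ∑ i, (y * a i) % (m : ℤ) :=
    Finset.sum_congr rfl fun i _ => h.mul_right (a i)
  simp [hodgeDim, this]

lemma half_sum (m : ℕ) (hm : 2 ≤ m) (h : ℤ → ℚ)
    (hsym : ∀ x : ℤ, h ((m : ℤ) - x) = h x) :
    ∑ n ∈ Icc 1 (m - 1), h n =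
      2 * ∑ n ∈ Icc 1 ((m - 1) / 2), h n +
        (if m % 2 = 0 then h ((m / 2 : ℕ)) else 0) := by
  have split : (∑ n ∈ Ioc 0 (m / 2), h n) + ∑ n ∈ Ioc (m / 2) (m - 1), h n
      = ∑ n ∈ Ioc 0 (m - 1), h n :=
    Finset.sum_Ioc_consecutive _ (by omega) (by omega)
  have e0 : Icc 1 (m - 1) = Ioc 0 (m - 1) := by
    ext x; simp [Finset.mem_Icc, Finset.mem_Ioc]; omega
  have hrefl : ∑ n ∈ Ioc (m / 2) (m - 1), h n = ∑ n ∈ Icc 1 ((m - 1) / 2), h n := by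
    refine Finset.sum_nbij' (i := fun n => m - n) (j := fun n => m - n) ?_ ?_ ?_ ?_ ?_
    · intro x hx; simp only [Finset.mem_Ioc, Finset.mem_Icc] at *; omega
    · intro x hx; simp only [Finset.mem_Ioc, Finset.mem_Icc] at *; omega
    · intro x hx; simp only [Finset.mem_Ioc] at hx; omega
    · intro x hx; simp only [Finset.mem_Icc] at hx; omega
    · intro x hx; simp only [Finset.mem_Ioc] at hx
      have hxm : ((m - x : ℕ) : ℤ) = (m : ℤ) - (x : ℤ) := by omega
      rw [hxm, hsym]
  have first : ∑ n ∈ Ioc 0 (m / 2), h n =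
      (∑ n ∈ Icc 1 ((m - 1) / 2), h n) + (if m % 2 = 0 then h ((m / 2 : ℕ)) else 0) := by
    by_cases hp : m % 2 = 0
    · have e1 : Ioc 0 (m / 2) = Icc 1 ((m - 1) / 2 + 1) := by
        ext x; simp [Finset.mem_Icc, Finset.mem_Ioc]; omega
      have e2 : (m - 1) / 2 + 1 = m / 2 := by omega
      rw [e1, Finset.sum_Icc_succ_top (by omega), e2]
      simp [hp]
    · have e1 : Ioc 0 (m / 2) = Icc 1 ((m - 1) / 2) := by
        ext x; simp [Finset.mem_Icc, Finset.mem_Ioc]; omega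
      simp [e1, hp]
  rw [e0, ← split, hrefl, first]
  ring

lemma emod_mul_emod' (m x y : ℤ) : (x * (y % m)) % m = (x * y) % m := by
  conv_lhs => rw [Int.mul_emod, Int.emod_emod_of_dvd _ dvd_rfl, ← Int.mul_emod]

lemma full_reindex (m : ℕ) (hm : 2 ≤ m) (h : ℤ → ℚ)
    (hper : ∀ x y : ℤ, x ≡ y [ZMOD (m : ℤ)] → h x = h y)
    (t u : ℤ) (htu : (t * u) % (m : ℤ) = 1 % (m : ℤ)) :
    ∑ n ∈ Icc 1 (m - 1), h (t * n) = ∑ n ∈ Icc 1 (m - 1), h n := by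
  have hm0 : (0 : ℤ) < m := by exact_mod_cast (by omega : 0 < m)
  have key : ∀ (s w : ℤ), (s * w) % (m : ℤ) = 1 % m → ∀ n : ℕ, n ∈ Icc 1 (m - 1) →
      ((s * n) % (m : ℤ) ≠ 0 ∧ (w * ((s * n) % m)) % (m : ℤ) = n) := by
    intro s w hsw n hn
    simp only [Finset.mem_Icc] at hn
    have h1 : (w * ((s * (n : ℤ)) % m)) % (m : ℤ) = ((n : ℤ)) % m := by
      rw [emod_mul_emod']
      have hww : w * (s * (n : ℤ)) = (s * w) * n := by ring
      rw [hww, Int.mul_emod, hsw, ← Int.mul_emod]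
      simp
    have hn' : ((n : ℤ)) % (m : ℤ) = (n : ℤ) :=
      Int.emod_eq_of_lt (by exact_mod_cast Nat.zero_le n)
        (by exact_mod_cast (by omega : n < m))
    constructor
    · intro h0
      rw [h0, mul_zero] at h1
      rw [hn'] at h1
      simp at h1
      omega
    · rw [h1, hn']
  refine Finset.sum_nbij' (i := fun n => ((t * n) % (m : ℤ)).toNat)
    (j := fun n => ((u * n) % (m : ℤ)).toNat) ?_ ?_ ?_ ?_ ?_
  · intro n hn
    obtain ⟨h0, _⟩ := key t u htu n hn
    have hnn := Int.emod_nonneg (t * (n : ℤ)) (show (m : ℤ) ≠ 0 by omega)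
    have hlt := Int.emod_lt_of_pos (t * (n : ℤ)) hm0
    simp only [Finset.mem_Icc]
    omega
  · intro n hn
    have htu' : (u * t) % (m : ℤ) = 1 % m := by rw [mul_comm u t]; exact htu
    obtain ⟨h0, _⟩ := key u t htu' n hn
    have hnn := Int.emod_nonneg (u * (n : ℤ)) (show (m : ℤ) ≠ 0 by omega)
    have hlt := Int.emod_lt_of_pos (u * (n : ℤ)) hm0
    simp only [Finset.mem_Icc]
    omega
  · intro n hn
    obtain ⟨h0, h2⟩ := key t u htu n hn
    have e : (((t * (n : ℤ)) % (m : ℤ)).toNat : ℤ) = (t * n) % m :=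
      Int.toNat_of_nonneg (Int.emod_nonneg _ (by omega))
    have h3 : ((u * ((((t * (n : ℤ)) % (m : ℤ)).toNat : ℤ))) % (m : ℤ)) = n := by
      rw [e]; exact h2
    omega
  · intro n hn
    have htu' : (u * t) % (m : ℤ) = 1 % m := by rw [mul_comm u t]; exact htu
    obtain ⟨h0, h2⟩ := key u t htu' n hn
    have e : (((u * (n : ℤ)) % (m : ℤ)).toNat : ℤ) = (u * n) % m :=
      Int.toNat_of_nonneg (Int.emod_nonneg _ (by omega))
    have h3 : ((t * ((((u * (n : ℤ)) % (m : ℤ)).toNat : ℤ))) % (m : ℤ)) = n := by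
      rw [e]; exact h2
    omega
  · intro n hn
    apply hper
    show _ % (m : ℤ) = _ % (m : ℤ)
    rw [Int.toNat_of_nonneg (Int.emod_nonneg _ (show (m : ℤ) ≠ 0 by omega))]
    rw [Int.emod_emod_of_dvd _ dvd_rfl]

end Aux

/-- Invariance under equivalence: if `(m, N, a)` is a triple, `gcd(t, m) = 1`, `σ` is a
permutation, and `a'_i := (t·a_{σ(i)}) mod m`, then `(m, N, a')` is again a triple,
`d_n(a') = d_{t·n}(a)` for every `n` with `m ∤ n`, and `(m, N, a')` satisfies condition (⋆)
if and only if `(m, N, a)` does. -/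
theorem star_invariant_under_equivalence (m N : ℕ) (a : Fin N → ℤ)
    (htriple : IsTriple m N a) (t : ℤ) (ht : Int.gcd t m = 1) (σ : Equiv.Perm (Fin N))
    (a' : Fin N → ℤ) (ha' : ∀ i, a' i = (t * a (σ i)) % (m : ℤ)) :
    IsTriple m N a' ∧
    (∀ n : ℤ, ¬ (m : ℤ) ∣ n → hodgeDim m N a' n = hodgeDim m N a (t * n)) ∧
    (CondStar m N a' ↔ CondStar m N a) := by
  obtain ⟨hm, hN, hbound, hgcd, hdvd⟩ := htriple
  have hm0 : (0 : ℤ) < m := by exact_mod_cast (by omega : 0 < m)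
  have hmne : (m : ℤ) ≠ 0 := by omega
  have hcop : IsCoprime t (m : ℤ) := Int.isCoprime_iff_gcd_eq_one.mpr ht
  obtain ⟨u, v, huv⟩ := hcop
  have hcop : IsCoprime t (m : ℤ) := Int.isCoprime_iff_gcd_eq_one.mpr ht
  have htu : (t * u) % (m : ℤ) = 1 % (m : ℤ) :=
    (Int.modEq_iff_dvd.mpr ⟨v, by linarith⟩ : Int.ModEq (m : ℤ) (t * u) 1)
  -- a' is bounded
  have hnz : ∀ i, ¬ (m : ℤ) ∣ (t * a (σ i)) := by
    intro i hdiv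
    have h1 : (m : ℤ) ∣ a (σ i) := (hcop.symm).dvd_of_dvd_mul_left hdiv
    have h2 := (hbound (σ i)).1
    have h3 := (hbound (σ i)).2
    have := Int.le_of_dvd (by omega) h1
    omega
  have hb' : ∀ i, 1 ≤ a' i ∧ a' i ≤ (m : ℤ) - 1 := by
    intro i
    rw [ha' i]
    have h0 := Int.emod_nonneg (t * a (σ i)) hmne
    have h1 := Int.emod_lt_of_pos (t * a (σ i)) hm0
    have h2 : (t * a (σ i)) % (m : ℤ) ≠ 0 := fun h => hnz i (Int.dvd_of_emod_eq_zero h)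
    omega
  -- gcd condition
  have hgcd' : Int.gcd (m : ℤ) (Finset.univ.gcd a') = 1 := by
    set g : ℕ := Int.gcd (m : ℤ) (Finset.univ.gcd a') with hgdef
    have hgm : (g : ℤ) ∣ (m : ℤ) := Int.gcd_dvd_left _ _
    have hga' : ∀ i, (g : ℤ) ∣ a' i := fun i =>
      (Int.gcd_dvd_right _ _).trans (Finset.gcd_dvd (Finset.mem_univ i))
    have hcopg : IsCoprime (g : ℤ) t := by
      exact IsCoprime.of_isCoprime_of_dvd_left hcop.symm hgm
    have hga : ∀ j, (g : ℤ) ∣ a j := by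
      intro j
      have hmem : (g : ℤ) ∣ t * a (σ (σ.symm j)) := by
        have h1 : (g : ℤ) ∣ (t * a (σ (σ.symm j))) % m := by
          rw [← ha' (σ.symm j)]; exact hga' _
        have hq : t * a (σ (σ.symm j))
            = (t * a (σ (σ.symm j))) % m + (m : ℤ) * ((t * a (σ (σ.symm j))) / m) := by
          rw [Int.emod_add_mul_ediv]
        rw [hq]
        exact dvd_add h1 (hgm.mul_right _)
      have h2 : (g : ℤ) ∣ a (σ (σ.symm j)) := hcopg.dvd_of_dvd_mul_left hmem
      rwa [Equiv.apply_symm_apply] at h2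
    have hgg : (g : ℤ) ∣ Finset.univ.gcd a := Finset.dvd_gcd fun i _ => hga i
    have h1 : (g : ℤ) ∣ ((Int.gcd (m : ℤ) (Finset.univ.gcd a) : ℕ) : ℤ) :=
      Int.dvd_coe_gcd hgm hgg
    rw [hgcd] at h1
    have h2 : (g : ℤ) = 1 := Int.eq_one_of_dvd_one (by positivity) (by exact_mod_cast h1)
    exact_mod_cast h2
  -- sum condition
  have hsum' : (m : ℤ) ∣ ∑ i, a' i := by
    have h1 : (m : ℤ) ∣ ∑ i, (a' i - t * a (σ i)) := by
      refine Finset.dvd_sum fun i _ => ?_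
      rw [ha' i]
      exact ⟨-(t * a (σ i) / m), by rw [Int.emod_def]; ring⟩
    have h2 : ∑ i, t * a (σ i) = t * ∑ i, a i := by
      rw [← Finset.mul_sum]
      congr 1
      exact Equiv.sum_comp σ a
    have h4 : ∑ i, a' i = (∑ i, (a' i - t * a (σ i))) + t * ∑ i, a i := by
      rw [← h2, ← Finset.sum_add_distrib]
      simp
    rw [h4]
    exact dvd_add h1 (hdvd.mul_left t)
  -- the twist formula
  have htwist : ∀ n : ℤ, hodgeDim m N a' n = hodgeDim m N a (t * n) := by
    intro n
    have step : ∀ i, (n * a' i) % (m : ℤ) = ((t * n) * a (σ i)) % (m : ℤ) := by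
      intro i
      rw [ha' i, emod_mul_emod']
      congr 1
      ring
    have hsum : ∑ i, (n * a' i) % (m : ℤ) = ∑ i, ((t * n) * a i) % (m : ℤ) := by
      rw [Finset.sum_congr rfl fun i _ => step i]
      exact Equiv.sum_comp σ (fun j => ((t * n) * a j) % (m : ℤ))
    simp [hodgeDim, hsum]
  -- condition star transfer
  set F : ℤ → ℚ := fun x => hodgeDim m N a x * hodgeDim m N a (-x) with hF
  have hper : ∀ x y : ℤ, x ≡ y [ZMOD (m : ℤ)] → F x = F y := by
    intro x y h
    simp only [hF]
    rw [hodgeDim_congr m N a h, hodgeDim_congr m N a h.neg]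
  have hFneg : ∀ x : ℤ, F (-x) = F x := by
    intro x; simp only [hF, neg_neg]; ring
  have hFsym : ∀ x : ℤ, F ((m : ℤ) - x) = F x := by
    intro x
    rw [hper _ (-x) (Int.modEq_iff_dvd.mpr ⟨-1, by ring⟩), hFneg]
  have hGsym : ∀ x : ℤ, F (t * ((m : ℤ) - x)) = F (t * x) := by
    intro x
    rw [hper _ (-(t * x)) (Int.modEq_iff_dvd.mpr ⟨-t, by ring⟩), hFneg]
  have hprod : ∀ n : ℤ, hodgeDim m N a n * hodgeDim m N a ((m : ℤ) - n) = F n := by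
    intro n
    simp only [hF]
    rw [hodgeDim_congr m N a
      (show ((m : ℤ) - n) ≡ -n [ZMOD (m : ℤ)] from Int.modEq_iff_dvd.mpr ⟨-1, by ring⟩)]
  have hprod' : ∀ n : ℤ, hodgeDim m N a' n * hodgeDim m N a' ((m : ℤ) - n) = F (t * n) := by
    intro n
    rw [htwist, htwist]
    simp only [hF]
    rw [hodgeDim_congr m N a
      (show (t * ((m : ℤ) - n)) ≡ -(t * n) [ZMOD (m : ℤ)] from
        Int.modEq_iff_dvd.mpr ⟨-t, by ring⟩)]
  have hmod2 : m % 2 = 0 → t * (((m / 2 : ℕ)) : ℤ) ≡ (((m / 2 : ℕ)) : ℤ) [ZMOD (m : ℤ)] := by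
    intro hp
    obtain ⟨k, hk⟩ | ⟨k, hk⟩ := Int.even_or_odd t
    · exfalso
      have h2t : (2 : ℤ) ∣ t := ⟨k, by omega⟩
      have h2m : (2 : ℤ) ∣ (m : ℤ) := by omega
      have := Int.dvd_gcd h2t h2m
      rw [ht] at this
      norm_num at this
    · refine Int.modEq_iff_dvd.mpr ⟨-k, ?_⟩
      have h2 : (((m / 2 : ℕ)) : ℤ) * 2 = (m : ℤ) := by omega
      linear_combination (-(((m / 2 : ℕ)) : ℤ)) * hk - k * h2
  have halfF := half_sum m hm F hFsym
  have halfG := half_sum m hm (fun x => F (t * x)) (fun x => hGsym x)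
  have hfull := full_reindex m hm F hper t u htu
  have key : ∑ n ∈ Finset.Icc 1 ((m - 1) / 2), F (t * (n : ℤ))
      = ∑ n ∈ Finset.Icc 1 ((m - 1) / 2), F (n : ℤ) := by
    by_cases hp : m % 2 = 0
    · have e := hper _ _ (hmod2 hp)
      simp only [hp, if_true] at halfF halfG
      rw [e] at halfG
      linarith
    · simp only [hp, if_false] at halfF halfG
      linarith
  have ed : ((m : ℤ) / 2) = (((m / 2 : ℕ)) : ℤ) := by omega
  have Hmain : (∑ n ∈ Finset.Icc 1 ((m - 1) / 2),
        hodgeDim m N a' n * hodgeDim m N a' ((m : ℤ) - n)) +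
      (if m % 2 = 0 then hodgeDim m N a' (m / 2) * (hodgeDim m N a' (m / 2) + 1) / 2 else 0)
      = (∑ n ∈ Finset.Icc 1 ((m - 1) / 2),
        hodgeDim m N a n * hodgeDim m N a ((m : ℤ) - n)) +
      (if m % 2 = 0 then hodgeDim m N a (m / 2) * (hodgeDim m N a (m / 2) + 1) / 2 else 0) := by
    congr 1
    · have L : ∑ n ∈ Finset.Icc 1 ((m - 1) / 2),
          hodgeDim m N a' (n : ℤ) * hodgeDim m N a' ((m : ℤ) - (n : ℤ))
          = ∑ n ∈ Finset.Icc 1 ((m - 1) / 2), F (t * (n : ℤ)) :=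
        Finset.sum_congr rfl fun n _ => hprod' (n : ℤ)
      have R : ∑ n ∈ Finset.Icc 1 ((m - 1) / 2),
          hodgeDim m N a (n : ℤ) * hodgeDim m N a ((m : ℤ) - (n : ℤ))
          = ∑ n ∈ Finset.Icc 1 ((m - 1) / 2), F (n : ℤ) :=
        Finset.sum_congr rfl fun n _ => hprod (n : ℤ)
      exact L.trans (key.trans R.symm)
    · by_cases hp : m % 2 = 0
      · have e1 : hodgeDim m N a' ((m : ℤ) / 2) = hodgeDim m N a ((m : ℤ) / 2) := by
          rw [htwist, ed]
          exact hodgeDim_congr m N a (hmod2 hp)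
        simp [hp, e1]
      · simp [hp]
  refine ⟨⟨hm, hN, hb', hgcd', hsum'⟩, fun n _ => htwist n, ?_⟩
  unfold CondStar
  rw [Hmain]
end

section
/- Let (m, N, a) be a triple as in the context satisfying condition (⋆), and let n be an integer with gcd(n, m) = 1 and 2n ≢ 0 (mod m). Then the product d_n·d_{m−n} is either 0 or N − 3; moreover, if it is nonzero then {d_n, d_{m−n}} = {1, N − 3}. -/
open Finset

lemma emod_add_neg_emod {m x : ℤ} (hm : 0 < m) (hx : ¬ m ∣ x) :
    x % m + (-x) % m = m := by
  have h1 : 0 ≤ x % m := Int.emod_nonneg x hm.ne'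
  have h2 : x % m < m := Int.emod_lt_of_pos x hm
  have h3 : 0 ≤ (-x) % m := Int.emod_nonneg _ hm.ne'
  have h4 : (-x) % m < m := Int.emod_lt_of_pos _ hm
  have h5 : x % m ≠ 0 := fun h => hx (Int.dvd_of_emod_eq_zero h)
  have h7 : m ∣ (x % m + (-x) % m) := by
    apply Int.dvd_of_emod_eq_zero
    rw [← Int.add_emod]
    simp
  obtain ⟨k, hk⟩ := h7
  have h8 : 0 < m * k := by rw [← hk]; omega
  have h9 : m * k < 2 * m := by rw [← hk]; omega
  have hklt : k < 2 := by by_contra h; push_neg at h; nlinarith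
  have hkgt : 0 < k := by by_contra h; push_neg at h; nlinarith
  have hk1 : k = 1 := by omega
  rw [hk, hk1, mul_one]

lemma not_dvd_of_bounds {m k : ℤ} (h1 : 0 < k) (h2 : k < m) : ¬ m ∣ k :=
  fun h => absurd (Int.le_of_dvd h1 h) (not_le.mpr h2)

section aux
variable {m N : ℕ} {a : Fin N → ℤ}

lemma hodge_congr {n n' : ℤ} (h : n ≡ n' [ZMOD (m : ℤ)]) :
    hodgeDim m N a n = hodgeDim m N a n' := by
  unfold hodgeDim
  congr 2
  exact_mod_cast Finset.sum_congr rfl fun i _ => (h.mul_right (a i) : _)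

lemma hodge_S_dvd (ht : IsTriple m N a) (n : ℤ) :
    (m : ℤ) ∣ ∑ i, (n * a i) % (m : ℤ) := by
  apply Int.dvd_of_emod_eq_zero
  rw [← Finset.sum_int_mod, ← Finset.mul_sum]
  exact Int.emod_eq_zero_of_dvd (ht.2.2.2.2.mul_left n)

lemma hodge_int (ht : IsTriple m N a) (n : ℤ) :
    ∃ z : ℤ, hodgeDim m N a n = (z : ℚ) := by
  obtain ⟨t, htt⟩ := hodge_S_dvd ht n
  have hm0 : (m : ℚ) ≠ 0 := by
    have := ht.1; positivity
  refine ⟨t - 1, ?_⟩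
  unfold hodgeDim
  rw [htt]
  push_cast
  field_simp

lemma hodge_nonneg (ht : IsTriple m N a) {n : ℤ} (hn : ¬ (m : ℤ) ∣ n) :
    0 ≤ hodgeDim m N a n := by
  have hm : (0 : ℤ) < m := by exact_mod_cast Nat.lt_of_lt_of_le Nat.zero_lt_two ht.1
  set S := ∑ i, (n * a i) % (m : ℤ) with hS
  have hdvd : (m : ℤ) ∣ S := hodge_S_dvd ht n
  have hSnn : 0 ≤ S := Finset.sum_nonneg fun i _ => Int.emod_nonneg _ hm.ne'
  have hSne : S ≠ 0 := by
    intro h0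
    have hz : ∀ i ∈ Finset.univ, (n * a i) % (m : ℤ) = 0 := by
      rw [← Finset.sum_eq_zero_iff_of_nonneg fun i _ => Int.emod_nonneg _ hm.ne']
      exact h0
    have hdv : ∀ i ∈ Finset.univ, (m : ℤ) ∣ n * a i :=
      fun i hi => Int.dvd_of_emod_eq_zero (hz i hi)
    have hg : (m : ℤ) ∣ Finset.univ.gcd (fun i => n * a i) := Finset.dvd_gcd hdv
    have hgl : Finset.univ.gcd (fun i => n * a i) = normalize n * Finset.univ.gcd a :=
      Finset.gcd_mul_left
    rw [hgl] at hg
    have hco : IsCoprime (m : ℤ) (Finset.univ.gcd a) :=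
      Int.isCoprime_iff_gcd_eq_one.mpr ht.2.2.2.1
    have hmn : (m : ℤ) ∣ normalize n :=
      hco.dvd_of_dvd_mul_right hg
    exact hn (dvd_normalize_iff.mp hmn)
  have hSpos : 0 < S := lt_of_le_of_ne hSnn (Ne.symm hSne)
  have hmS : (m : ℤ) ≤ S := Int.le_of_dvd hSpos hdvd
  unfold hodgeDim
  rw [sub_nonneg, le_div_iff₀ (by exact_mod_cast hm)]
  rw [one_mul]
  exact_mod_cast hmS

lemma hodge_sum (ht : IsTriple m N a) {n : ℤ} (hn : Int.gcd n (m : ℤ) = 1) :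
    hodgeDim m N a n + hodgeDim m N a ((m : ℤ) - n) = (N : ℚ) - 2 := by
  have hm : (0 : ℤ) < m := by exact_mod_cast Nat.lt_of_lt_of_le Nat.zero_lt_two ht.1
  have hco : IsCoprime (m : ℤ) n := by
    rw [Int.isCoprime_iff_gcd_eq_one, Int.gcd_comm]; exact hn
  have key : ∀ i : Fin N, (n * a i) % (m : ℤ) + (((m : ℤ) - n) * a i) % (m : ℤ) = m := by
    intro i
    have ha := ht.2.2.1 i
    have hnd : ¬ (m : ℤ) ∣ n * a i := by
      intro h
      have h2 : (m : ℤ) ∣ a i := hco.dvd_of_dvd_mul_left h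
      have := Int.le_of_dvd (by linarith [ha.1]) h2
      linarith [ha.2]
    have heq : (((m : ℤ) - n) * a i) % (m : ℤ) = (-(n * a i)) % (m : ℤ) := by
      have h3 : ((m : ℤ) - n) * a i = -(n * a i) + (m : ℤ) * a i := by ring
      rw [h3, Int.add_mul_emod_self_left]
    rw [heq]
    exact emod_add_neg_emod hm hnd
  have hSsum : (∑ i, (n * a i) % (m : ℤ)) + (∑ i, (((m : ℤ) - n) * a i) % (m : ℤ))
      = (N : ℤ) * m := by
    rw [← Finset.sum_add_distrib]
    simp only [key]
    simp [Finset.sum_const, mul_comm]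
  have hScast : ((∑ i, (n * a i) % (m : ℤ) : ℤ) : ℚ)
      + ((∑ i, (((m : ℤ) - n) * a i) % (m : ℤ) : ℤ) : ℚ) = (N : ℚ) * m := by
    exact_mod_cast congrArg (fun z : ℤ => (z : ℚ)) hSsum
  have hm0 : (m : ℚ) ≠ 0 := by have := ht.1; positivity
  unfold hodgeDim
  field_simp
  push_cast at hScast ⊢
  linarith [hScast]
end aux

/-- If `(m, N, a)` satisfies condition (⋆) and `n` is an integer with `gcd(n, m) = 1` and
`2n ≢ 0 (mod m)`, then `d_n·d_{m−n}` is `0` or `N − 3`; if nonzero then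
`{d_n, d_{m−n}} = {1, N − 3}`. -/
theorem star_product_dichotomy (m N : ℕ) (a : Fin N → ℤ)
    (htriple : IsTriple m N a) (hstar : CondStar m N a)
    (n : ℤ) (hn : Int.gcd n m = 1) (h2n : ¬ (m : ℤ) ∣ 2 * n) :
    (hodgeDim m N a n * hodgeDim m N a ((m : ℤ) - n) = 0 ∨
      hodgeDim m N a n * hodgeDim m N a ((m : ℤ) - n) = (N : ℚ) - 3) ∧
    (hodgeDim m N a n * hodgeDim m N a ((m : ℤ) - n) ≠ 0 →
      ((hodgeDim m N a n = 1 ∧ hodgeDim m N a ((m : ℤ) - n) = (N : ℚ) - 3) ∨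
       (hodgeDim m N a n = (N : ℚ) - 3 ∧ hodgeDim m N a ((m : ℤ) - n) = 1))) := by
  have hm2 := htriple.1
  have hN4 := htriple.2.1
  have hmz : (0 : ℤ) < m := by exact_mod_cast Nat.lt_of_lt_of_le Nat.zero_lt_two hm2
  have hmdn : ¬ (m : ℤ) ∣ n := by
    intro h
    have h1 : (m : ℤ) ∣ (Int.gcd n m : ℤ) := Int.dvd_coe_gcd h dvd_rfl
    rw [hn] at h1
    have := Int.le_of_dvd one_pos h1
    omega
  -- the residue r of n mod m
  set r : ℕ := (n % (m : ℤ)).toNat with hrdef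
  have hrm : (r : ℤ) = n % m := Int.toNat_of_nonneg (Int.emod_nonneg n hmz.ne')
  have hrlt : (r : ℤ) < m := hrm ▸ Int.emod_lt_of_pos n hmz
  have hrne : (r : ℤ) ≠ 0 := by
    intro h
    exact hmdn (Int.dvd_of_emod_eq_zero (by rw [← hrm, h]))
  have hrpos : (0 : ℤ) < r := lt_of_le_of_ne (Int.ofNat_nonneg r) (Ne.symm hrne)
  have hr1 : 1 ≤ r := by omega
  have hr2 : r < m := by omega
  have h2r : 2 * r ≠ m := by
    intro h
    apply h2n
    have hcm : (2 : ℤ) * r = m := by exact_mod_cast congrArg (fun t : ℕ => (t : ℤ)) h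
    have hd1 : (m : ℤ) ∣ 2 * (n % m) := ⟨1, by rw [mul_one, ← hrm, hcm]⟩
    have hd2 : (m : ℤ) ∣ 2 * n - 2 * (n % m) :=
      ⟨2 * (n / m), by linear_combination (-2 : ℤ) * Int.mul_ediv_add_emod n m⟩
    have := dvd_add hd2 hd1
    simpa using this
  have hmeq : n ≡ (r : ℤ) [ZMOD (m : ℤ)] := by
    show n % (m : ℤ) = (r : ℤ) % m
    rw [Int.emod_eq_of_lt hrpos.le hrlt]
    exact hrm.symm
  have hcong1 : hodgeDim m N a n = hodgeDim m N a (r : ℤ) := hodge_congr hmeq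
  have hcong2 : hodgeDim m N a ((m : ℤ) - n) = hodgeDim m N a ((m : ℤ) - r) :=
    hodge_congr (Int.ModEq.sub_left _ hmeq)
  set x := hodgeDim m N a (r : ℤ) with hxdef
  set y := hodgeDim m N a ((m : ℤ) - r) with hydef
  have hx0 : 0 ≤ x := hodge_nonneg htriple (not_dvd_of_bounds hrpos hrlt)
  have hy0 : 0 ≤ y := hodge_nonneg htriple
    (not_dvd_of_bounds (by omega) (by omega))
  have hsum : x + y = (N : ℚ) - 2 := by
    have := hodge_sum htriple hn
    rwa [hcong1, hcong2] at this
  -- the product is one of the star terms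
  unfold CondStar at hstar
  have hfnn : ∀ k ∈ Finset.Icc 1 ((m - 1) / 2),
      0 ≤ hodgeDim m N a (k : ℤ) * hodgeDim m N a ((m : ℤ) - k) := by
    intro k hk
    rw [Finset.mem_Icc] at hk
    have hk1 : 1 ≤ k := hk.1
    have hkm : k < m := by omega
    exact mul_nonneg
      (hodge_nonneg htriple (not_dvd_of_bounds (by exact_mod_cast hk1) (by exact_mod_cast hkm)))
      (hodge_nonneg htriple (not_dvd_of_bounds (by push_cast; omega) (by push_cast; omega)))
  have heps : 0 ≤ (if m % 2 = 0 then
      hodgeDim m N a (m / 2) * (hodgeDim m N a (m / 2) + 1) / 2 else 0 : ℚ) := by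
    split
    · rename_i hev
      have hd0 : 0 ≤ hodgeDim m N a ((m : ℤ) / 2) := hodge_nonneg htriple
        (not_dvd_of_bounds (by omega) (by omega))
      have : 0 ≤ hodgeDim m N a ((m : ℤ) / 2) * (hodgeDim m N a ((m : ℤ) / 2) + 1) :=
        mul_nonneg hd0 (by linarith)
      linarith
    · exact le_refl _
  have hterm : x * y ≤ ∑ k ∈ Finset.Icc 1 ((m - 1) / 2),
      hodgeDim m N a (k : ℤ) * hodgeDim m N a ((m : ℤ) - k) := by
    rcases le_or_gt r ((m - 1) / 2) with hcase | hcase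
    · have hmem : r ∈ Finset.Icc 1 ((m - 1) / 2) := Finset.mem_Icc.mpr ⟨hr1, hcase⟩
      exact Finset.single_le_sum hfnn hmem
    · have hmem : m - r ∈ Finset.Icc 1 ((m - 1) / 2) := Finset.mem_Icc.mpr ⟨by omega, by omega⟩
      have hc1 : ((m - r : ℕ) : ℤ) = (m : ℤ) - r := by push_cast [hr2.le]; ring
      have hc2 : (m : ℤ) - ((m - r : ℕ) : ℤ) = (r : ℤ) := by rw [hc1]; ring
      have := Finset.single_le_sum hfnn hmem
      rw [hc1, sub_sub_cancel, mul_comm] at this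
      exact this
  have hle : x * y ≤ (N : ℚ) - 3 := by linarith [hterm, heps, hstar.ge, hstar.le]
  -- integrality
  obtain ⟨zx, hzx⟩ := hodge_int htriple (r : ℤ)
  obtain ⟨zy, hzy⟩ := hodge_int htriple ((m : ℤ) - r)
  rw [← hxdef] at hzx
  rw [← hydef] at hzy
  have hZsum : zx + zy = (N : ℤ) - 2 := by
    have : (zx : ℚ) + zy = (N : ℚ) - 2 := by rw [← hzx, ← hzy]; exact hsum
    exact_mod_cast this
  have hZle : zx * zy ≤ (N : ℤ) - 3 := by
    have : (zx : ℚ) * zy ≤ (N : ℚ) - 3 := by rw [← hzx, ← hzy]; exact hle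
    exact_mod_cast this
  have hZx0 : 0 ≤ zx := by exact_mod_cast hzx ▸ hx0
  have hZy0 : 0 ≤ zy := by exact_mod_cast hzy ▸ hy0
  rw [hcong1, hcong2, hzx, hzy]
  constructor
  · by_cases h0 : zx * zy = 0
    · left; exact_mod_cast congrArg (fun t : ℤ => (t : ℚ)) h0
    · right
      have hx1 : 1 ≤ zx := by rcases mul_ne_zero_iff.mp h0 with ⟨h, _⟩; omega
      have hy1 : 1 ≤ zy := by rcases mul_ne_zero_iff.mp h0 with ⟨_, h⟩; omega
      have : zx * zy = (N : ℤ) - 3 := by nlinarith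
      exact_mod_cast congrArg (fun t : ℤ => (t : ℚ)) this
  · intro hne
    have h0 : zx * zy ≠ 0 := by
      intro h
      exact hne (by exact_mod_cast congrArg (fun t : ℤ => (t : ℚ)) h)
    have hx1 : 1 ≤ zx := by rcases mul_ne_zero_iff.mp h0 with ⟨h, _⟩; omega
    have hy1 : 1 ≤ zy := by rcases mul_ne_zero_iff.mp h0 with ⟨_, h⟩; omega
    have hprod : zx * zy = (N : ℤ) - 3 := by nlinarith
    have hfact : (zx - 1) * (zy - 1) = 0 := by linear_combination hprod - hZsum
    rcases mul_eq_zero.mp hfact with h | h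
    · left
      have hzx1 : zx = 1 := by omega
      have hzy1 : zy = (N : ℤ) - 3 := by omega
      constructor
      · exact_mod_cast congrArg (fun t : ℤ => (t : ℚ)) hzx1
      · exact_mod_cast congrArg (fun t : ℤ => (t : ℚ)) hzy1
    · right
      have hzy1 : zy = 1 := by omega
      have hzx1 : zx = (N : ℤ) - 3 := by omega
      constructor
      · exact_mod_cast congrArg (fun t : ℤ => (t : ℚ)) hzx1
      · exact_mod_cast congrArg (fun t : ℤ => (t : ℚ)) hzy1
end
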